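/- Let X be a finite index set. For each i ∈ X, let X_i be an m × m real matrix, z_i ∈ ℝ^m, and σ_i > 0; let P be an m × m real symmetric positive semidefinite matrix, and set I_i = (1/σ_i²)·(X_i P X_i^⊤ + z_i z_i^⊤). Let I_x be an m × m real symmetric positive definite matrix, and define the D-optimality set function f^D(S) = log det(I_x + Σ_{i∈S} I_i) − log det(I_x) for S ⊆ X. Then f^D is submodular: for all S ⊆ T ⊂ X and j ∈ X \ T, f^D(S ∪ {j}) − f^D(S) ≥ f^D(T ∪ {j}) − f^D(T). -/

import Mathlib

open Finset Matrix

section Aux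

variable {m : ℕ}

open scoped MatrixOrder

private lemma psd_smul' {M : Matrix (Fin m) (Fin m) ℝ} (hM : M.PosSemidef) {c : ℝ} (hc : 0 ≤ c) :
    (c • M).PosSemidef := by
  refine PosSemidef.of_dotProduct_mulVec_nonneg ?_ fun x => ?_
  · unfold Matrix.IsHermitian
    rw [conjTranspose_smul, hM.1]
    simp
  · rw [smul_mulVec, dotProduct_smul]
    exact mul_nonneg hc (hM.dotProduct_mulVec_nonneg x)

private lemma psd_vecMulVec' (z : Fin m → ℝ) : (vecMulVec z z).PosSemidef := by
  refine PosSemidef.of_dotProduct_mulVec_nonneg ?_ fun x => ?_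
  · unfold Matrix.IsHermitian
    ext i j
    simp [vecMulVec, mul_comm]
  · have : dotProduct (star x) (vecMulVec z z *ᵥ x) = (z ⬝ᵥ x) * (z ⬝ᵥ x) := by
      simp [vecMulVec, mulVec, dotProduct, Finset.mul_sum, Finset.sum_mul]
      congr 1; ext i; congr 1; ext j; ring
    rw [this]
    exact mul_self_nonneg _

private lemma psd_sum' {κ : Type*} [DecidableEq κ] (s : Finset κ)
    (f : κ → Matrix (Fin m) (Fin m) ℝ) (h : ∀ i ∈ s, (f i).PosSemidef) :
    (∑ i ∈ s, f i).PosSemidef := by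
  induction s using Finset.induction with
  | empty => simpa using Matrix.PosSemidef.zero
  | @insert a s ha ih =>
      rw [Finset.sum_insert ha]
      exact (h a (Finset.mem_insert_self a s)).add
        (ih fun i hi => h i (Finset.mem_insert_of_mem hi))

private lemma det_add_vmv' {A : Matrix (Fin m) (Fin m) ℝ} (hA : A.PosDef) (v : Fin m → ℝ) :
    (A + vecMulVec v v).det = A.det * (1 + v ⬝ᵥ A⁻¹ *ᵥ v) := by
  rw [vecMulVec_eq Unit, Matrix.det_add_replicateCol_mul_replicateRow hA.det_pos.ne'.isUnit]
  congr 1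
  rw [det_unique]
  simp only [Matrix.add_apply, Matrix.one_apply_eq, Matrix.mul_apply, Matrix.replicateCol_apply,
    Matrix.replicateRow_apply, dotProduct, mulVec, Finset.univ_unique, Finset.sum_singleton]
  congr 1
  simp_rw [Finset.sum_mul, Finset.mul_sum]
  rw [Finset.sum_comm]
  simp_rw [mul_assoc]

private lemma dot_mulVec_left' (M : Matrix (Fin m) (Fin m) ℝ) (x y : Fin m → ℝ) :
    (M *ᵥ x) ⬝ᵥ y = x ⬝ᵥ (Mᵀ *ᵥ y) := by
  rw [dotProduct_comm, Matrix.dotProduct_mulVec, ← Matrix.mulVec_transpose, dotProduct_comm]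

private lemma sqrt_det_ne' {A : Matrix (Fin m) (Fin m) ℝ} (hA : A.PosDef) :
    (CFC.sqrt A).det ≠ 0 := by
  intro h
  have h2 : (CFC.sqrt A * CFC.sqrt A).det = 0 := by
    rw [det_mul, h, mul_zero]
  rw [CFC.sqrt_mul_sqrt_self A hA.posSemidef.nonneg] at h2
  exact hA.det_pos.ne' h2

private lemma dot_inv_anti' {A D : Matrix (Fin m) (Fin m) ℝ} (hA : A.PosDef)
    (hD : D.PosSemidef) (v : Fin m → ℝ) :
    v ⬝ᵥ (A + D)⁻¹ *ᵥ v ≤ v ⬝ᵥ A⁻¹ *ᵥ v := by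
  set B := A + D with hBdef
  have hB : B.PosDef := hA.add_posSemidef hD
  set R := CFC.sqrt A with hRdef
  have hRsym : Rᵀ = R := by
    have := (CFC.sqrt_nonneg A).posSemidef.isHermitian
    rwa [Matrix.IsHermitian, conjTranspose_eq_transpose_of_trivial] at this
  have hRR : R * R = A := CFC.sqrt_mul_sqrt_self A hA.posSemidef.nonneg
  have hRdet : R.det ≠ 0 := sqrt_det_ne' hA
  have hRinv : R * R⁻¹ = 1 := Matrix.mul_nonsing_inv R hRdet.isUnit
  have hRinvsym : (R⁻¹)ᵀ = R⁻¹ := by rw [Matrix.transpose_nonsing_inv, hRsym]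
  have hAinv : A⁻¹ = R⁻¹ * R⁻¹ := by rw [← hRR, Matrix.mul_inv_rev]
  obtain ⟨u, hudef⟩ : ∃ u, u = B⁻¹ *ᵥ v := ⟨_, rfl⟩
  have hvBu : v = B *ᵥ u := by
    rw [hudef, Matrix.mulVec_mulVec, Matrix.mul_nonsing_inv B hB.det_pos.ne'.isUnit,
      Matrix.one_mulVec]
  set s := v ⬝ᵥ B⁻¹ *ᵥ v with hsdef
  set t := v ⬝ᵥ A⁻¹ *ᵥ v with htdef
  have hsu : s = u ⬝ᵥ B *ᵥ u := by
    rw [hsdef, ← hudef]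
    nth_rewrite 1 [hvBu]
    rw [dot_mulVec_left']
    have hBsym : Bᵀ = B := by
      have := hB.isHermitian
      rwa [Matrix.IsHermitian, conjTranspose_eq_transpose_of_trivial] at this
    rw [hBsym]
  have hs2 : s = (R *ᵥ u) ⬝ᵥ (R⁻¹ *ᵥ v) := by
    rw [dot_mulVec_left', hRsym, Matrix.mulVec_mulVec, hRinv, Matrix.one_mulVec,
      hsdef, ← hudef, dotProduct_comm]
  have hAu : u ⬝ᵥ A *ᵥ u = (R *ᵥ u) ⬝ᵥ (R *ᵥ u) := by
    rw [dot_mulVec_left', hRsym, Matrix.mulVec_mulVec, hRR]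
  have ht2 : t = (R⁻¹ *ᵥ v) ⬝ᵥ (R⁻¹ *ᵥ v) := by
    rw [dot_mulVec_left', hRinvsym, Matrix.mulVec_mulVec, ← hAinv, htdef]
  have hCS : s ^ 2 ≤ (u ⬝ᵥ A *ᵥ u) * t := by
    rw [hs2, hAu, ht2]
    simpa only [dotProduct, pow_two] using
      Finset.sum_mul_sq_le_sq_mul_sq Finset.univ (R *ᵥ u) (R⁻¹ *ᵥ v)
  have hsnonneg : 0 ≤ s := by simpa using hB.inv.posSemidef.dotProduct_mulVec_nonneg v
  have htnonneg : 0 ≤ t := by simpa using hA.inv.posSemidef.dotProduct_mulVec_nonneg v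
  have hDu : 0 ≤ u ⬝ᵥ D *ᵥ u := by simpa using hD.dotProduct_mulVec_nonneg u
  have huAu_le : u ⬝ᵥ A *ᵥ u ≤ s := by
    rw [hsu, hBdef, Matrix.add_mulVec, dotProduct_add]
    linarith
  nlinarith [hCS, hsnonneg, htnonneg, huAu_le]

private lemma log_step' {A : Matrix (Fin m) (Fin m) ℝ} (hA : A.PosDef) (v : Fin m → ℝ) :
    Real.log (A + vecMulVec v v).det - Real.log A.det = Real.log (1 + v ⬝ᵥ A⁻¹ *ᵥ v) := by
  have hq : (0:ℝ) < 1 + v ⬝ᵥ A⁻¹ *ᵥ v := by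
    have : 0 ≤ v ⬝ᵥ A⁻¹ *ᵥ v := by simpa using hA.inv.posSemidef.dotProduct_mulVec_nonneg v
    linarith
  rw [det_add_vmv' hA v, Real.log_mul hA.det_pos.ne' hq.ne']
  ring

private lemma log_det_step' {A D : Matrix (Fin m) (Fin m) ℝ} (hA : A.PosDef)
    (hD : D.PosSemidef) (v : Fin m → ℝ) :
    Real.log (A + D + vecMulVec v v).det - Real.log (A + D).det ≤
      Real.log (A + vecMulVec v v).det - Real.log A.det := by
  have hB : (A + D).PosDef := hA.add_posSemidef hD
  rw [log_step' hA v, log_step' hB v]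
  apply Real.log_le_log
  · have : 0 ≤ v ⬝ᵥ (A + D)⁻¹ *ᵥ v := by simpa using hB.inv.posSemidef.dotProduct_mulVec_nonneg v
    linarith
  · linarith [dot_inv_anti' hA hD v]

private lemma psd_eq_sum' {M : Matrix (Fin m) (Fin m) ℝ} (hM : M.PosSemidef) :
    M = ∑ k : Fin m, vecMulVec (CFC.sqrt M k) (CFC.sqrt M k) := by
  ext i j
  conv_lhs => rw [← CFC.sqrt_mul_sqrt_self M hM.nonneg]
  have hsym : CFC.sqrt M i = fun k => CFC.sqrt M k i := by
    funext k
    have := (CFC.sqrt_nonneg M).posSemidef.isHermitian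
    rw [Matrix.IsHermitian, conjTranspose_eq_transpose_of_trivial] at this
    exact congrFun (congrFun this.symm i) k
  rw [Matrix.mul_apply]
  rw [Matrix.sum_apply]
  apply Finset.sum_congr rfl
  intro k _
  rw [vecMulVec_apply]
  exact congrArg (· * CFC.sqrt M k j) (congrFun hsym k)

private lemma submod_general' {A D M : Matrix (Fin m) (Fin m) ℝ} (hA : A.PosDef)
    (hD : D.PosSemidef) (hM : M.PosSemidef) :
    Real.log (A + D + M).det - Real.log (A + D).det ≤
      Real.log (A + M).det - Real.log A.det := by
  obtain ⟨w, hw⟩ : ∃ w : Fin m → Fin m → ℝ, M = ∑ k : Fin m, vecMulVec (w k) (w k) :=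
    ⟨CFC.sqrt (A := Matrix (Fin m) (Fin m) ℝ) M, psd_eq_sum' hM⟩
  rw [hw]
  have claim : ∀ s : Finset (Fin m),
      Real.log (A + D + ∑ k ∈ s, vecMulVec (w k) (w k)).det - Real.log (A + D).det ≤
        Real.log (A + ∑ k ∈ s, vecMulVec (w k) (w k)).det - Real.log A.det := by
    intro s
    induction s using Finset.induction with
    | empty => simp
    | @insert a s ha ih =>
        have hSpsd : (∑ k ∈ s, vecMulVec (w k) (w k)).PosSemidef :=
          psd_sum' s _ (fun k _ => psd_vecMulVec' (w k))
        have hA' : (A + ∑ k ∈ s, vecMulVec (w k) (w k)).PosDef := hA.add_posSemidef hSpsd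
        have hstep := log_det_step' hA' hD (w a)
        have e3 : A + ∑ k ∈ s, vecMulVec (w k) (w k) + D
            = A + D + ∑ k ∈ s, vecMulVec (w k) (w k) := by abel
        rw [e3] at hstep
        rw [Finset.sum_insert ha]
        have e1 : A + D + (vecMulVec (w a) (w a) + ∑ k ∈ s, vecMulVec (w k) (w k))
            = A + D + ∑ k ∈ s, vecMulVec (w k) (w k) + vecMulVec (w a) (w a) := by abel
        have e2 : A + (vecMulVec (w a) (w a) + ∑ k ∈ s, vecMulVec (w k) (w k))
            = A + ∑ k ∈ s, vecMulVec (w k) (w k) + vecMulVec (w a) (w a) := by abel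
        rw [e1, e2]
        linarith [ih, hstep]
  exact claim Finset.univ

end Aux

/-- The D-optimality criterion of the Van Trees bound,
`f^D(S) = log det(I_x + Σ_{i∈S} I_i) − log det(I_x)` with
`I_i = (1/σ_i²)(X_i P X_iᵀ + z_i z_iᵀ)`, is submodular: for all
`S ⊆ T ⊂ X` and `j ∈ X \ T`, `f^D_j(S) ≥ f^D_j(T)`. -/
theorem stmt_8 {ι : Type*} [Fintype ι] [DecidableEq ι] {m : ℕ}
    (Xm : ι → Matrix (Fin m) (Fin m) ℝ) (z : ι → Fin m → ℝ)
    (σ : ι → ℝ) (hσ : ∀ i, 0 < σ i)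
    (P : Matrix (Fin m) (Fin m) ℝ) (hP : P.PosSemidef)
    (Ix : Matrix (Fin m) (Fin m) ℝ) (hIx : Ix.PosDef)
    (I : ι → Matrix (Fin m) (Fin m) ℝ)
    (hI : ∀ i, I i = (1 / (σ i) ^ 2) •
      (Xm i * P * (Xm i)ᵀ + vecMulVec (z i) (z i)))
    (fD : Finset ι → ℝ)
    (hfD : ∀ S : Finset ι,
      fD S = Real.log (Ix + ∑ i ∈ S, I i).det - Real.log Ix.det) :
    ∀ (S T : Finset ι) (j : ι), S ⊆ T → j ∉ T →
      fD (insert j T) - fD T ≤ fD (insert j S) - fD S := by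
  intro S T j hST hjT
  have hjS : j ∉ S := fun h => hjT (hST h)
  have hIpsd : ∀ i, (I i).PosSemidef := by
    intro i
    rw [hI i]
    apply psd_smul' _ (by positivity)
    apply Matrix.PosSemidef.add _ (psd_vecMulVec' (z i))
    have := hP.mul_mul_conjTranspose_same (Xm i)
    rwa [conjTranspose_eq_transpose_of_trivial] at this
  have hA : (Ix + ∑ i ∈ S, I i).PosDef :=
    hIx.add_posSemidef (psd_sum' S I (fun i _ => hIpsd i))
  have hD : (∑ i ∈ T \ S, I i).PosSemidef := psd_sum' _ I (fun i _ => hIpsd i)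
  have hsum : ∑ i ∈ T, I i = ∑ i ∈ S, I i + ∑ i ∈ T \ S, I i := by
    rw [add_comm, Finset.sum_sdiff hST]
  rw [hfD, hfD, hfD, hfD, Finset.sum_insert hjT, Finset.sum_insert hjS, hsum]
  have key := submod_general' hA hD (hIpsd j)
  have e1 : Ix + (I j + (∑ i ∈ S, I i + ∑ i ∈ T \ S, I i))
      = Ix + ∑ i ∈ S, I i + ∑ i ∈ T \ S, I i + I j := by abel
  have e2 : Ix + (∑ i ∈ S, I i + ∑ i ∈ T \ S, I i)
      = Ix + ∑ i ∈ S, I i + ∑ i ∈ T \ S, I i := by abel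
  have e3 : Ix + (I j + ∑ i ∈ S, I i) = Ix + ∑ i ∈ S, I i + I j := by abel
  have e4 : Ix + ∑ i ∈ S, I i = Ix + ∑ i ∈ S, I i := rfl
  rw [e1, e2, e3]
  linarith [key]
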